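/- arXiv:1712.01350 — 8 statements merged into one kernel-verified Lean document; each statement's English description precedes it below -/
import Mathlib

section
/- Let n ≥ 1, N = 2^n, and let w = (w_0,…,w_{n-1}) be a real vector. Then (1/N) Σ_{x ∈ {0,1}^n} exp(2πi (Σ_j w_j x_j)/N) = 0 if and only if there exists an index 0 ≤ j ≤ n-1 such that w_j ≡ 2^{n-1} (mod 2^n), i.e., w_j = 2^{n-1} + k·2^n for some integer k. -/
open Complex

lemma aux_exp_iff (n : ℕ) (hn : 1 ≤ n) (a : ℝ) :
    1 + Complex.exp (2 * (Real.pi : ℂ) * Complex.I * (a : ℂ) / (2 : ℂ) ^ n) = 0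
      ↔ ∃ k : ℤ, a = 2 ^ (n - 1) + (k : ℝ) * 2 ^ n := by
  have h2 : (2 : ℂ) ^ n ≠ 0 := pow_ne_zero _ two_ne_zero
  have hπI : (Real.pi : ℂ) * Complex.I ≠ 0 := by
    simp [Real.pi_ne_zero, Complex.I_ne_zero]
  have hpow : (2 : ℝ) ^ (n - 1) * 2 = 2 ^ n := by
    rw [← pow_succ]; congr 1; omega
  have hpowC : (2 : ℂ) ^ (n - 1) * 2 = 2 ^ n := by
    rw [← pow_succ]; congr 1; omega
  constructor
  · intro h
    have he : Complex.exp (2 * (Real.pi : ℂ) * Complex.I * (a : ℂ) / (2 : ℂ) ^ n + Real.pi * Complex.I) = 1 := by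
      rw [Complex.exp_add, Complex.exp_pi_mul_I]
      linear_combination -h
    rw [Complex.exp_eq_one_iff] at he
    obtain ⟨m, hm⟩ := he
    field_simp at hm
    have hc : (2 * (a : ℂ) + 2 ^ n) = 2 * m * 2 ^ n := by
      apply mul_left_cancel₀ hπI
      linear_combination ((Real.pi : ℂ) * Complex.I) * hm
    have hr : 2 * a + 2 ^ n = 2 * (m : ℝ) * 2 ^ n := by exact_mod_cast hc
    exact ⟨m - 1, by push_cast; linarith [hpow]⟩
  · rintro ⟨k, rfl⟩
    have harg : 2 * (Real.pi : ℂ) * Complex.I * ((2 ^ (n - 1) + (k : ℝ) * 2 ^ n : ℝ) : ℂ) / (2 : ℂ) ^ n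
        = Real.pi * Complex.I + (k : ℂ) * (2 * Real.pi * Complex.I) := by
      push_cast
      field_simp
      linear_combination hpowC
    rw [harg, Complex.exp_add, Complex.exp_pi_mul_I, Complex.exp_int_mul_two_pi_mul_I]
    ring

/-- For `n ≥ 1`, `N = 2^n` and a real vector `w`,
`(1/N) Σ_{x ∈ {0,1}^n} exp(2πi (Σ_j w_j x_j)/N) = 0` iff there is an index `j` with
`w_j ≡ 2^{n-1} (mod 2^n)`, i.e. `w_j = 2^{n-1} + k·2^n` for some integer `k`. -/
theorem generalized_qft_stmt_6 (n : ℕ) (hn : 1 ≤ n) (w : Fin n → ℝ) :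
    (1 / (2 : ℂ) ^ n) * (∑ x : Fin n → Fin 2,
        Complex.exp (2 * (Real.pi : ℂ) * Complex.I *
          ((∑ j, w j * ((x j : ℕ) : ℝ) : ℝ) : ℂ) / (2 : ℂ) ^ n)) = 0
      ↔ ∃ j : Fin n, ∃ k : ℤ, w j = 2 ^ (n - 1) + (k : ℝ) * 2 ^ n := by
  have h2 : (2 : ℂ) ^ n ≠ 0 := pow_ne_zero _ two_ne_zero
  have key : (∑ x : Fin n → Fin 2,
        Complex.exp (2 * (Real.pi : ℂ) * Complex.I *
          ((∑ j, w j * ((x j : ℕ) : ℝ) : ℝ) : ℂ) / (2 : ℂ) ^ n))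
      = ∏ j, (1 + Complex.exp (2 * (Real.pi : ℂ) * Complex.I * (w j : ℂ) / (2 : ℂ) ^ n)) := by
    have : ∀ j : Fin n, (1 + Complex.exp (2 * (Real.pi : ℂ) * Complex.I * (w j : ℂ) / (2 : ℂ) ^ n))
        = ∑ x : Fin 2, Complex.exp (2 * (Real.pi : ℂ) * Complex.I * ((w j : ℂ) * (x : ℕ)) / (2 : ℂ) ^ n) := by
      intro j
      rw [Fin.sum_univ_two]
      simp
    rw [funext this, Fintype.prod_sum]
    refine Finset.sum_congr rfl fun x _ => ?_
    rw [← Complex.exp_sum]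
    congr 1
    push_cast
    rw [Finset.mul_sum, Finset.sum_div]
  rw [mul_eq_zero, key, Finset.prod_eq_zero_iff]
  simp only [one_div, inv_eq_zero, h2, false_or, Finset.mem_univ, true_and]
  exact exists_congr fun j => aux_exp_iff n hn (w j)
end

section
/- Let n ≥ 1, N = 2^n, let Φ be any real n×n matrix, and let T be the N×N matrix with (y,x) entry (1/√N) exp(2πi (yΦxᵀ)/N), where x, y range over {0,1}^n. Then T is unitary if and only if for every pair of distinct bit vectors y, u ∈ {0,1}^n there exists a column index 0 ≤ j ≤ n-1 such that Σ_{i=0}^{n-1}(y_i - u_i)·φ_{ij} ≡ 2^{n-1} (mod 2^n), i.e., that signed sum equals 2^{n-1} + k·2^n for some integer k. -/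
lemma exp_eq_neg_one_iff' {z : ℂ} : Complex.exp z = -1 ↔ ∃ m : ℤ, z = (2*m+1) * (Real.pi * Complex.I) := by
  rw [show (-1:ℂ) = Complex.exp (Real.pi * Complex.I) from Complex.exp_pi_mul_I.symm,
    Complex.exp_eq_exp_iff_exists_int]
  constructor
  · rintro ⟨m, rfl⟩; exact ⟨m, by ring⟩
  · rintro ⟨m, rfl⟩; exact ⟨m, by ring⟩

lemma factor_iff (n : ℕ) (hn : 1 ≤ n) (c : ℝ) :
    Complex.exp (2 * (Real.pi:ℂ) * Complex.I * (c:ℂ) / 2^n) = -1 ↔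
      ∃ k : ℤ, c = 2^(n-1) + (k:ℝ) * 2^n := by
  rw [exp_eq_neg_one_iff']
  have hpi := Real.pi_ne_zero
  have hpow : (2:ℝ)^n = 2 * 2^(n-1) := by rw [← pow_succ']; congr 1; omega
  have hpowC : (2:ℂ)^n = 2 * 2^(n-1) := by rw [← pow_succ']; congr 1; omega
  constructor
  · rintro ⟨m, hm⟩
    refine ⟨m, ?_⟩
    have h1 : ((2 * Real.pi * c / 2^n : ℝ) : ℂ) * Complex.I = ((((2*m+1) : ℝ) * Real.pi : ℝ) : ℂ) * Complex.I := by
      push_cast; linear_combination hm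
    have h3 : (2 * Real.pi * c / 2^n : ℝ) = (2*(m:ℝ)+1) * Real.pi := by
      exact_mod_cast mul_right_cancel₀ Complex.I_ne_zero h1
    have h2 : (2:ℝ)^n ≠ 0 := by positivity
    rw [div_eq_iff h2] at h3
    have h4 : 2 * c = (2*(m:ℝ)+1) * 2^n :=
      mul_left_cancel₀ hpi (by linear_combination h3)
    linear_combination h4/2 + hpow/2
  · rintro ⟨k, hk⟩
    refine ⟨k, ?_⟩
    have h2C : ((2:ℂ))^(n-1) ≠ 0 := pow_ne_zero _ two_ne_zero
    rw [hk]; push_cast; rw [hpowC]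
    have hpiC : (Real.pi : ℂ) ≠ 0 := Complex.ofReal_ne_zero.mpr hpi
    field_simp; ring

/-- Let `Φ` be any real `n×n` matrix and `T` the `2^n × 2^n` matrix with
`(y,x)` entry `(1/√N) exp(2πi (yΦxᵀ)/N)`. Then `T` is unitary iff for every pair of
distinct bit vectors `y, u` there is a column `j` with
`Σ_i (y_i - u_i) φ_{ij} ≡ 2^{n-1} (mod 2^n)`. -/
theorem generalized_qft_stmt_8 (n : ℕ) (hn : 1 ≤ n)
    (Φ : Matrix (Fin n) (Fin n) ℝ)
    (T : Matrix (Fin n → Fin 2) (Fin n → Fin 2) ℂ)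
    (hT : ∀ y x : Fin n → Fin 2,
      T y x = ((1 / Real.sqrt (2 ^ n) : ℝ) : ℂ) *
        Complex.exp (2 * (Real.pi : ℂ) * Complex.I *
          ((∑ i, ∑ j, ((y i : ℕ) : ℝ) * Φ i j * ((x j : ℕ) : ℝ) : ℝ) : ℂ) / (2 : ℂ) ^ n)) :
    T ∈ Matrix.unitaryGroup (Fin n → Fin 2) ℂ
      ↔ ∀ y u : Fin n → Fin 2, y ≠ u → ∃ j : Fin n, ∃ k : ℤ,
          (∑ i, (((y i : ℕ) : ℝ) - ((u i : ℕ) : ℝ)) * Φ i j)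
            = 2 ^ (n - 1) + (k : ℝ) * 2 ^ n := by
  have h2C : ((2:ℂ))^n ≠ 0 := pow_ne_zero _ two_ne_zero
  set c : (Fin n → Fin 2) → (Fin n → Fin 2) → Fin n → ℝ :=
    fun y u j => ∑ i, (((y i : ℕ) : ℝ) - ((u i : ℕ) : ℝ)) * Φ i j with hc
  have key : ∀ y u : Fin n → Fin 2, (T * star T) y u
      = (1/(2:ℂ)^n) * ∏ j, (1 + Complex.exp (2 * (Real.pi:ℂ) * Complex.I * ((c y u j : ℝ):ℂ) / 2^n)) := by
    intro y u
    rw [Matrix.star_eq_conjTranspose, Matrix.mul_apply]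
    have step1 : ∀ x : Fin n → Fin 2,
        T y x * T.conjTranspose x u
          = (1/(2:ℂ)^n) * ∏ j, Complex.exp (2 * (Real.pi:ℂ) * Complex.I * ((c y u j * (x j : ℕ) : ℝ):ℂ) / 2^n) := by
      intro x
      rw [Matrix.conjTranspose_apply, hT y x, hT u x]
      simp only [star_mul', RCLike.star_def, Complex.conj_ofReal, ← Complex.exp_conj]
      have hconj : (starRingEnd ℂ) (2 * (Real.pi : ℂ) * Complex.I *
          ((∑ i, ∑ j, ((u i : ℕ) : ℝ) * Φ i j * ((x j : ℕ) : ℝ) : ℝ) : ℂ) / (2 : ℂ) ^ n)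
          = -(2 * (Real.pi : ℂ) * Complex.I *
          ((∑ i, ∑ j, ((u i : ℕ) : ℝ) * Φ i j * ((x j : ℕ) : ℝ) : ℝ) : ℂ) / (2 : ℂ) ^ n) := by
        simp [map_div₀, Complex.conj_I, map_ofNat]
        ring
      rw [hconj]
      have hsqrt : (((1 / Real.sqrt (2 ^ n) : ℝ) : ℂ)) * (((1 / Real.sqrt (2 ^ n) : ℝ) : ℂ))
          = 1/(2:ℂ)^n := by
        rw [← Complex.ofReal_mul]
        have : (1 / Real.sqrt (2 ^ n) : ℝ) * (1 / Real.sqrt (2 ^ n) : ℝ) = 1 / 2^n := by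
          rw [div_mul_div_comm, one_mul, Real.mul_self_sqrt (by positivity)]
        rw [this]; push_cast; ring
      have hS : (∑ i, ∑ j, ((y i : ℕ) : ℝ) * Φ i j * ((x j : ℕ) : ℝ))
          - (∑ i, ∑ j, ((u i : ℕ) : ℝ) * Φ i j * ((x j : ℕ) : ℝ))
          = ∑ j, c y u j * ((x j : ℕ) : ℝ) := by
        rw [Finset.sum_comm, Finset.sum_comm (f := fun i j => ((u i : ℕ) : ℝ) * Φ i j * ((x j : ℕ) : ℝ))]
        rw [← Finset.sum_sub_distrib]
        refine Finset.sum_congr rfl fun j _ => ?_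
        rw [hc]
        simp only
        rw [Finset.sum_mul, ← Finset.sum_sub_distrib]
        exact Finset.sum_congr rfl fun i _ => by ring
      rw [← Complex.exp_sum]
      have harg : (∑ j, 2 * (Real.pi:ℂ) * Complex.I * ((c y u j * (x j : ℕ) : ℝ):ℂ) / 2^n)
          = 2 * (Real.pi : ℂ) * Complex.I *
              ((∑ i, ∑ j, ((y i : ℕ) : ℝ) * Φ i j * ((x j : ℕ) : ℝ) : ℝ) : ℂ) / (2 : ℂ) ^ n
            + -(2 * (Real.pi : ℂ) * Complex.I *
              ((∑ i, ∑ j, ((u i : ℕ) : ℝ) * Φ i j * ((x j : ℕ) : ℝ) : ℝ) : ℂ) / (2 : ℂ) ^ n) := by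
        have h1 : ((∑ j, c y u j * ((x j : ℕ) : ℝ) : ℝ) : ℂ)
            = ((∑ i, ∑ j, ((y i : ℕ) : ℝ) * Φ i j * ((x j : ℕ) : ℝ) : ℝ) : ℂ)
              - ((∑ i, ∑ j, ((u i : ℕ) : ℝ) * Φ i j * ((x j : ℕ) : ℝ) : ℝ) : ℂ) := by
          rw [← Complex.ofReal_sub, hS]
        rw [show ∀ A B D : ℂ, 2 * (Real.pi:ℂ) * Complex.I * A / D + -(2 * (Real.pi:ℂ) * Complex.I * B / D)
            = 2 * (Real.pi:ℂ) * Complex.I * (A - B) / D from fun A B D => by ring, ← h1]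
        push_cast
        rw [Finset.mul_sum, Finset.sum_div]
      rw [harg, Complex.exp_add, ← hsqrt]
      ring
    rw [Finset.sum_congr rfl fun x _ => step1 x, ← Finset.mul_sum]
    congr 1
    rw [← Fintype.prod_sum (fun j (b : Fin 2) =>
      Complex.exp (2 * (Real.pi:ℂ) * Complex.I * ((c y u j * (b : ℕ) : ℝ):ℂ) / 2^n))]
    refine Finset.prod_congr rfl fun j _ => ?_
    rw [Fin.sum_univ_two]
    norm_num
  rw [Matrix.mem_unitaryGroup_iff, ← Matrix.ext_iff]
  constructor
  · intro h y u hyu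
    have h0 := h y u
    rw [key, Matrix.one_apply_ne hyu, mul_eq_zero] at h0
    rcases h0 with h0 | h0
    · exact absurd h0 (by simp [h2C])
    · obtain ⟨j, _, hj⟩ := Finset.prod_eq_zero_iff.mp h0
      have : Complex.exp (2 * (Real.pi:ℂ) * Complex.I * ((c y u j : ℝ):ℂ) / 2^n) = -1 := by
        linear_combination hj
      exact ⟨j, (factor_iff n hn _).mp this⟩
  · intro h y u
    rw [key, Matrix.one_apply]
    by_cases hyu : y = u
    · subst hyu
      rw [if_pos rfl]
      have : ∀ j, (1 + Complex.exp (2 * (Real.pi:ℂ) * Complex.I * ((c y y j : ℝ):ℂ) / 2^n)) = 2 := by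
        intro j
        have : c y y j = 0 := by simp [hc]
        rw [this]
        norm_num
      rw [Finset.prod_congr rfl fun j _ => this j, Finset.prod_const]
      simp [Finset.card_univ]
    · rw [if_neg hyu]
      obtain ⟨j, k, hk⟩ := h y u hyu
      have hfac : (1 + Complex.exp (2 * (Real.pi:ℂ) * Complex.I * ((c y u j : ℝ):ℂ) / 2^n)) = 0 := by
        rw [(factor_iff n hn (c y u j)).mpr ⟨k, hk⟩]; ring
      rw [Finset.prod_eq_zero (Finset.mem_univ j) hfac, mul_zero]
end

section
/- Let n ≥ 1, N = 2^n, let Φ be a real n×n matrix, and suppose the N×N matrix T with (y,x) entry (1/√N) exp(2πi (yΦxᵀ)/N) (x, y ranging over {0,1}^n) is unitary. Then for every r with 1 ≤ r ≤ n and every choice of row indices 0 ≤ i_1 < i_2 < ⋯ < i_r ≤ n-1 there exists a column index 0 ≤ j ≤ n-1 such that φ_{i_1 j} + φ_{i_2 j} + ⋯ + φ_{i_r j} ≡ 2^{n-1} (mod 2^n), i.e., the sum of those r entries of column j equals 2^{n-1} + k·2^n for some integer k. -/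
/-- Let `Φ` be a real `n×n` matrix such that the `2^n × 2^n` matrix `T`
with `(y,x)` entry `(1/√N) exp(2πi (yΦxᵀ)/N)` is unitary. Then for every nonempty set of
row indices `i_1 < ⋯ < i_r` (a nonempty `s : Finset (Fin n)`) there is a column `j` with
`Σ_{i ∈ s} φ_{ij} ≡ 2^{n-1} (mod 2^n)`. -/
theorem generalized_qft_stmt_9 (n : ℕ) (hn : 1 ≤ n)
    (Φ : Matrix (Fin n) (Fin n) ℝ)
    (T : Matrix (Fin n → Fin 2) (Fin n → Fin 2) ℂ)
    (hT : ∀ y x : Fin n → Fin 2,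
      T y x = ((1 / Real.sqrt (2 ^ n) : ℝ) : ℂ) *
        Complex.exp (2 * (Real.pi : ℂ) * Complex.I *
          ((∑ i, ∑ j, ((y i : ℕ) : ℝ) * Φ i j * ((x j : ℕ) : ℝ) : ℝ) : ℂ) / (2 : ℂ) ^ n))
    (hunitary : T ∈ Matrix.unitaryGroup (Fin n → Fin 2) ℂ) :
    ∀ s : Finset (Fin n), s.Nonempty → ∃ j : Fin n, ∃ k : ℤ,
      (∑ i ∈ s, Φ i j) = 2 ^ (n - 1) + (k : ℝ) * 2 ^ n := by
  classical
  intro s hs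
  set a : ℂ := ((1 / Real.sqrt (2 ^ n) : ℝ) : ℂ) with ha
  set c : Fin n → ℝ := fun j => ∑ i ∈ s, Φ i j with hc
  set y : Fin n → Fin 2 := fun i => if i ∈ s then 1 else 0 with hydef
  set f : Fin n → Fin 2 → ℂ := fun j b =>
    Complex.exp (2 * (Real.pi : ℂ) * Complex.I * ((c j : ℂ) * ((b : ℕ) : ℂ)) / (2 : ℂ) ^ n)
    with hf
  have hy0 : y ≠ (fun _ => 0) := by
    obtain ⟨i, hi⟩ := hs
    intro h
    have := congrFun h i
    simp [hydef, hi] at this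
  have ha0 : a ≠ 0 := by
    have h1 : (0 : ℝ) < 1 / Real.sqrt (2 ^ n) := by positivity
    exact Complex.ofReal_ne_zero.mpr (ne_of_gt h1)
  have hTT : T * star T = 1 := Matrix.mem_unitaryGroup_iff.mp hunitary
  have h0 : (T * star T) y (fun _ => 0) = 0 := by
    rw [hTT, Matrix.one_apply_ne hy0]
  rw [Matrix.mul_apply] at h0
  have hzero : ∀ x, T (fun _ => 0) x = a := by
    intro x
    rw [hT]
    simp [ha]
  have hexp : ∀ x : Fin n → Fin 2,
      (∑ i, ∑ j, ((y i : ℕ) : ℝ) * Φ i j * ((x j : ℕ) : ℝ)) = ∑ j, c j * ((x j : ℕ) : ℝ) := by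
    intro x
    rw [Finset.sum_comm]
    refine Finset.sum_congr rfl fun j _ => ?_
    have h1 : ∀ i, ((y i : ℕ) : ℝ) * Φ i j * ((x j : ℕ) : ℝ) =
        if i ∈ s then Φ i j * ((x j : ℕ) : ℝ) else 0 := by
      intro i
      by_cases hi : i ∈ s <;> simp [hydef, hi]
    simp_rw [h1]
    rw [Finset.sum_ite_mem, Finset.univ_inter, hc, Finset.sum_mul]
  have hyx : ∀ x : Fin n → Fin 2, T y x = a * ∏ j, f j (x j) := by
    intro x
    rw [hT, ha, hf]
    congr 1
    rw [← Complex.exp_sum]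
    congr 1
    rw [← Finset.sum_div]
    congr 1
    rw [← Finset.mul_sum]
    congr 1
    rw [hexp x]
    push_cast
    rfl
  have h1 : a * a * ∑ x : Fin n → Fin 2, ∏ j, f j (x j) = 0 := by
    rw [Finset.mul_sum, ← h0]
    refine Finset.sum_congr rfl fun x _ => ?_
    rw [Matrix.star_apply, hzero x, hyx x, ha]
    rw [Complex.star_def, Complex.conj_ofReal]
    ring
  have h2 : (∑ x : Fin n → Fin 2, ∏ j, f j (x j)) = 0 := by
    rcases mul_eq_zero.mp h1 with h | h
    · exact absurd h (mul_ne_zero ha0 ha0)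
    · exact h
  rw [← Fintype.prod_sum] at h2
  obtain ⟨j, -, hj⟩ := Finset.prod_eq_zero_iff.mp h2
  rw [Fin.sum_univ_two] at hj
  have hj0 : f j 0 = 1 := by simp [hf]
  have hj1 : f j 1 = Complex.exp (2 * (Real.pi : ℂ) * Complex.I * (c j : ℂ) / (2 : ℂ) ^ n) := by
    simp [hf]
  rw [hj0, hj1] at hj
  have hneg : Complex.exp (2 * (Real.pi : ℂ) * Complex.I * (c j : ℂ) / (2 : ℂ) ^ n) = -1 := by
    linear_combination hj
  have hone : Complex.exp (2 * (Real.pi : ℂ) * Complex.I * (c j : ℂ) / (2 : ℂ) ^ n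
      + (Real.pi : ℂ) * Complex.I) = 1 := by
    rw [Complex.exp_add, Complex.exp_pi_mul_I, hneg]
    ring
  obtain ⟨k, hk⟩ := Complex.exp_eq_one_iff.mp hone
  have h2n : ((2 : ℂ)) ^ n ≠ 0 := pow_ne_zero _ two_ne_zero
  have hpiI : (Real.pi : ℂ) * Complex.I ≠ 0 :=
    mul_ne_zero (Complex.ofReal_ne_zero.mpr Real.pi_ne_zero) Complex.I_ne_zero
  have hcc : 2 * (c j : ℂ) + 2 ^ n = (k : ℂ) * 2 * 2 ^ n := by
    apply mul_left_cancel₀ hpiI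
    have h3 := congrArg (fun z => z * (2 : ℂ) ^ n) hk
    rw [add_mul, div_mul_cancel₀ _ h2n] at h3
    linear_combination h3
  have hR : 2 * c j + (2 : ℝ) ^ n = (k : ℝ) * 2 * 2 ^ n := by exact_mod_cast hcc
  refine ⟨j, k - 1, ?_⟩
  have hpow : (2 : ℝ) ^ (n - 1) * 2 = 2 ^ n := by
    rw [← pow_succ]
    congr 1
    omega
  show c j = 2 ^ (n - 1) + ((k - 1 : ℤ) : ℝ) * 2 ^ n
  push_cast
  linarith
end

section
/- Let n ≥ 1, N = 2^n, and for every pair 0 ≤ k < j ≤ n-1 let θ_{jk} : {0,1} → R be an arbitrary function. For a bit vector x ∈ {0,1}^n set Θ_j(x) = θ_{j0}(x_0) + θ_{j1}(x_1) + ⋯ + θ_{j,j-1}(x_{j-1}) for 1 ≤ j ≤ n-1. Then the N×N real matrix M with (y,x) entry (1/√N)·(-1)^{Σ_{j=0}^{n-1} x_j y_j}·Π_{j=1}^{n-1}[cos Θ_j(x) + (-1)^{x_j + y_j} sin Θ_j(x)] is unitary (equivalently, orthogonal). -/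
lemma qft_bit (c s : ℝ) (h : c^2 + s^2 = 1) (y y' : Fin 2) :
    ∑ b : Fin 2, ((-1:ℝ)^((b:ℕ)*(y:ℕ)) * (-1:ℝ)^((b:ℕ)*(y':ℕ)) *
      ((c + (-1:ℝ)^((b:ℕ)+(y:ℕ)) * s) * (c + (-1:ℝ)^((b:ℕ)+(y':ℕ)) * s))) =
    if y = y' then 2 else 0 := by
  fin_cases y <;> fin_cases y' <;>
    simp [Fin.sum_univ_two, pow_succ] <;>
    first
      | linear_combination 2*h
      | ring

lemma qft_snoc_eq {n : ℕ} (q : Fin n → Fin 2) (b b' : Fin 2) (k : Fin (n+1))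
    (hk : (k : ℕ) < n) :
    Fin.snoc (α := fun _ => Fin 2) q b k = Fin.snoc (α := fun _ => Fin 2) q b' k := by
  have : k = Fin.castSucc ⟨(k : ℕ), hk⟩ := by ext; simp
  rw [this, Fin.snoc_castSucc, Fin.snoc_castSucc]

lemma qft_key : ∀ (n : ℕ) (c s : Fin n → (Fin n → Fin 2) → ℝ)
    (_ : ∀ (j : Fin n) (x x' : Fin n → Fin 2),
      (∀ k : Fin n, (k:ℕ) < (j:ℕ) → x k = x' k) → c j x = c j x' ∧ s j x = s j x')
    (_ : ∀ j x, (c j x)^2 + (s j x)^2 = 1)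
    (y y' : Fin n → Fin 2),
    ∑ x : Fin n → Fin 2, ∏ j : Fin n,
      ((-1:ℝ)^((x j : ℕ)*(y j : ℕ)) * (-1:ℝ)^((x j : ℕ)*(y' j : ℕ)) *
        ((c j x + (-1:ℝ)^((x j:ℕ)+(y j:ℕ)) * s j x) *
         (c j x + (-1:ℝ)^((x j:ℕ)+(y' j:ℕ)) * s j x))) =
    if y = y' then (2:ℝ)^n else 0 := by
  intro n
  induction n with
  | zero =>
    intro c s hdep hcs y y'
    have : y = y' := Subsingleton.elim y y'
    simp [this]
  | succ n IH =>
    intro c s hdep hcs y y'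
    -- rewrite sum via snoc equivalence
    rw [← Equiv.sum_comp (Fin.snocEquiv (fun _ => Fin 2)), Fintype.sum_prod_type]
    have hsnoc : ∀ (b : Fin 2) (q : Fin n → Fin 2),
        Fin.snocEquiv (fun _ => Fin 2) (b, q) = Fin.snoc (α := fun _ => Fin 2) q b :=
      fun _ _ => rfl
    -- the summand splits
    have hsplit : ∀ (b : Fin 2) (q : Fin n → Fin 2),
        (∏ j : Fin (n+1),
          ((-1:ℝ)^(((Fin.snoc q b : Fin (n+1) → Fin 2) j : ℕ)*(y j : ℕ)) * (-1:ℝ)^(((Fin.snoc q b : Fin (n+1) → Fin 2) j : ℕ)*(y' j : ℕ)) *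
            ((c j (Fin.snoc q b) + (-1:ℝ)^(((Fin.snoc q b : Fin (n+1) → Fin 2) j:ℕ)+(y j:ℕ)) * s j (Fin.snoc q b)) *
             (c j (Fin.snoc q b) + (-1:ℝ)^(((Fin.snoc q b : Fin (n+1) → Fin 2) j:ℕ)+(y' j:ℕ)) * s j (Fin.snoc q b))))) =
        (∏ i : Fin n,
          ((-1:ℝ)^((q i : ℕ)*(y i.castSucc : ℕ)) * (-1:ℝ)^((q i : ℕ)*(y' i.castSucc : ℕ)) *
            ((c i.castSucc (Fin.snoc q 0) + (-1:ℝ)^((q i:ℕ)+(y i.castSucc:ℕ)) * s i.castSucc (Fin.snoc q 0)) *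
             (c i.castSucc (Fin.snoc q 0) + (-1:ℝ)^((q i:ℕ)+(y' i.castSucc:ℕ)) * s i.castSucc (Fin.snoc q 0))))) *
        ((-1:ℝ)^((b : ℕ)*(y (Fin.last n) : ℕ)) * (-1:ℝ)^((b : ℕ)*(y' (Fin.last n) : ℕ)) *
          ((c (Fin.last n) (Fin.snoc q 0) + (-1:ℝ)^((b:ℕ)+(y (Fin.last n):ℕ)) * s (Fin.last n) (Fin.snoc q 0)) *
           (c (Fin.last n) (Fin.snoc q 0) + (-1:ℝ)^((b:ℕ)+(y' (Fin.last n):ℕ)) * s (Fin.last n) (Fin.snoc q 0)))) := by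
      intro b q
      have hcseq : ∀ j : Fin (n+1), c j (Fin.snoc q b) = c j (Fin.snoc q 0) ∧
          s j (Fin.snoc q b) = s j (Fin.snoc q 0) := by
        intro j
        exact hdep j _ _ (fun k hk => qft_snoc_eq q b 0 k (lt_of_lt_of_le hk (Nat.lt_succ_iff.mp j.isLt)))
      rw [Fin.prod_univ_castSucc]
      congr 1
      · apply Finset.prod_congr rfl
        intro i _
        rw [(hcseq i.castSucc).1, (hcseq i.castSucc).2, Fin.snoc_castSucc]
      · rw [(hcseq (Fin.last n)).1, (hcseq (Fin.last n)).2, Fin.snoc_last]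
    simp only [hsnoc, hsplit]
    rw [Finset.sum_comm]
    have hinner : ∀ q : Fin n → Fin 2,
        (∑ b : Fin 2, (∏ i : Fin n,
          ((-1:ℝ)^((q i : ℕ)*(y i.castSucc : ℕ)) * (-1:ℝ)^((q i : ℕ)*(y' i.castSucc : ℕ)) *
            ((c i.castSucc (Fin.snoc q 0) + (-1:ℝ)^((q i:ℕ)+(y i.castSucc:ℕ)) * s i.castSucc (Fin.snoc q 0)) *
             (c i.castSucc (Fin.snoc q 0) + (-1:ℝ)^((q i:ℕ)+(y' i.castSucc:ℕ)) * s i.castSucc (Fin.snoc q 0))))) *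
          ((-1:ℝ)^((b : ℕ)*(y (Fin.last n) : ℕ)) * (-1:ℝ)^((b : ℕ)*(y' (Fin.last n) : ℕ)) *
            ((c (Fin.last n) (Fin.snoc q 0) + (-1:ℝ)^((b:ℕ)+(y (Fin.last n):ℕ)) * s (Fin.last n) (Fin.snoc q 0)) *
             (c (Fin.last n) (Fin.snoc q 0) + (-1:ℝ)^((b:ℕ)+(y' (Fin.last n):ℕ)) * s (Fin.last n) (Fin.snoc q 0))))) =
        (∏ i : Fin n,
          ((-1:ℝ)^((q i : ℕ)*(y i.castSucc : ℕ)) * (-1:ℝ)^((q i : ℕ)*(y' i.castSucc : ℕ)) *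
            ((c i.castSucc (Fin.snoc q 0) + (-1:ℝ)^((q i:ℕ)+(y i.castSucc:ℕ)) * s i.castSucc (Fin.snoc q 0)) *
             (c i.castSucc (Fin.snoc q 0) + (-1:ℝ)^((q i:ℕ)+(y' i.castSucc:ℕ)) * s i.castSucc (Fin.snoc q 0))))) *
        (if y (Fin.last n) = y' (Fin.last n) then 2 else 0) := by
      intro q
      rw [← Finset.mul_sum, qft_bit _ _ (hcs (Fin.last n) (Fin.snoc q 0))]
    simp only [hinner]
    by_cases hlast : y (Fin.last n) = y' (Fin.last n)
    · simp only [hlast, if_true, ← Finset.sum_mul]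
      have hIH := IH (fun i q => c i.castSucc (Fin.snoc q 0)) (fun i q => s i.castSucc (Fin.snoc q 0))
        (by
          intro i q q' hqq
          apply hdep
          intro k hk
          have hkn : (k : ℕ) < n := lt_of_lt_of_le hk (Nat.lt_succ_iff.mp i.castSucc.isLt)
          have hkc : k = Fin.castSucc ⟨(k : ℕ), hkn⟩ := by ext; simp
          have h1 : Fin.snoc (α := fun _ => Fin 2) q 0 k = q ⟨(k:ℕ), hkn⟩ := by
            conv_lhs => rw [hkc]
            rw [Fin.snoc_castSucc]
          have h2 : Fin.snoc (α := fun _ => Fin 2) q' 0 k = q' ⟨(k:ℕ), hkn⟩ := by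
            conv_lhs => rw [hkc]
            rw [Fin.snoc_castSucc]
          rw [h1, h2]
          exact hqq _ (by simpa using hk))
        (fun i q => hcs i.castSucc (Fin.snoc q 0))
        (fun i => y i.castSucc) (fun i => y' i.castSucc)
      rw [hIH]
      by_cases hinit : (fun i : Fin n => y i.castSucc) = (fun i => y' i.castSucc)
      · have hyy : y = y' := by
          funext j
          refine Fin.lastCases ?_ ?_ j
          · exact hlast
          · intro i; exact congrFun hinit i
        simp [hinit, hyy, pow_succ]
      · have hyy : y ≠ y' := by
          intro h; exact hinit (by funext i; rw [h])
        simp [hinit, hyy]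
    · have hyy : y ≠ y' := fun h => hlast (by rw [h])
      simp [hlast, hyy]

/-- Given arbitrary functions `θ_{jk} : {0,1} → ℝ` for `0 ≤ k < j ≤ n-1`,
set `Θ_j(x) = Σ_{k<j} θ_{jk}(x_k)`. Then the real `2^n × 2^n` matrix with `(y,x)` entry
`(1/√N)·(-1)^{Σ_j x_j y_j}·Π_{j=1}^{n-1}[cos Θ_j(x) + (-1)^{x_j+y_j} sin Θ_j(x)]`
is unitary (orthogonal). -/
theorem generalized_qft_stmt_11 (n : ℕ) (hn : 1 ≤ n)
    (θ : Fin n → Fin n → Fin 2 → ℝ)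
    (M : Matrix (Fin n → Fin 2) (Fin n → Fin 2) ℝ)
    (hM : ∀ y x : Fin n → Fin 2,
      M y x = (1 / Real.sqrt (2 ^ n)) * (-1 : ℝ) ^ (∑ j : Fin n, (x j : ℕ) * (y j : ℕ)) *
        ∏ j ∈ Finset.univ.filter (fun j : Fin n => 1 ≤ (j : ℕ)),
          (Real.cos (∑ k ∈ Finset.univ.filter (fun k : Fin n => (k : ℕ) < (j : ℕ)),
              θ j k (x k)) +
            (-1 : ℝ) ^ ((x j : ℕ) + (y j : ℕ)) *
              Real.sin (∑ k ∈ Finset.univ.filter (fun k : Fin n => (k : ℕ) < (j : ℕ)),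
                θ j k (x k)))) :
    M ∈ Matrix.unitaryGroup (Fin n → Fin 2) ℝ := by
  set Θ : Fin n → (Fin n → Fin 2) → ℝ := fun j x =>
    ∑ k ∈ Finset.univ.filter (fun k : Fin n => (k : ℕ) < (j : ℕ)), θ j k (x k) with hΘdef
  rw [Matrix.mem_unitaryGroup_iff]
  ext y y'
  rw [Matrix.mul_apply, Matrix.one_apply]
  have hterm : ∀ x : Fin n → Fin 2, M y x * (star M) x y' =
      (1/(2^n : ℝ)) * ∏ j : Fin n,
        ((-1:ℝ)^((x j : ℕ)*(y j : ℕ)) * (-1:ℝ)^((x j : ℕ)*(y' j : ℕ)) *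
          ((Real.cos (Θ j x) + (-1:ℝ)^((x j:ℕ)+(y j:ℕ)) * Real.sin (Θ j x)) *
           (Real.cos (Θ j x) + (-1:ℝ)^((x j:ℕ)+(y' j:ℕ)) * Real.sin (Θ j x)))) := by
    intro x
    rw [Matrix.star_apply, star_trivial, hM y x, hM y' x]
    have hfull : ∀ (y0 : Fin n → Fin 2),
        (∏ j ∈ Finset.univ.filter (fun j : Fin n => 1 ≤ (j : ℕ)),
          (Real.cos (Θ j x) + (-1:ℝ)^((x j:ℕ)+(y0 j:ℕ)) * Real.sin (Θ j x))) =
        ∏ j : Fin n,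
          (Real.cos (Θ j x) + (-1:ℝ)^((x j:ℕ)+(y0 j:ℕ)) * Real.sin (Θ j x)) := by
      intro y0
      apply Finset.prod_filter_of_ne
      intro j _ hne
      by_contra hj
      apply hne
      have hj0 : (j : ℕ) = 0 := by omega
      have hempty : Finset.univ.filter (fun k : Fin n => (k : ℕ) < (j : ℕ)) = ∅ := by
        apply Finset.filter_eq_empty_iff.mpr
        intro k _
        omega
      have : Θ j x = 0 := by
        show (∑ k ∈ Finset.univ.filter (fun k : Fin n => (k : ℕ) < (j : ℕ)), θ j k (x k)) = 0
        rw [hempty, Finset.sum_empty]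
      rw [this]
      simp
    have hsign : ∀ (y0 : Fin n → Fin 2),
        (-1:ℝ)^(∑ j : Fin n, (x j:ℕ)*(y0 j:ℕ)) = ∏ j : Fin n, (-1:ℝ)^((x j:ℕ)*(y0 j:ℕ)) :=
      fun y0 => (Finset.prod_pow_eq_pow_sum _ _ _).symm
    have hA : (1 / Real.sqrt (2^n)) * (1 / Real.sqrt (2^n)) = 1/(2^n:ℝ) := by
      rw [div_mul_div_comm, one_mul, Real.mul_self_sqrt (by positivity)]
    rw [hfull y, hfull y', hsign y, hsign y',
      Finset.prod_mul_distrib, Finset.prod_mul_distrib, Finset.prod_mul_distrib, ← hA]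
    ring
  simp only [hterm]
  rw [← Finset.mul_sum,
    qft_key n (fun j x => Real.cos (Θ j x)) (fun j x => Real.sin (Θ j x))
      (by
        intro j x x' h
        have hΘ : Θ j x = Θ j x' := by
          rw [hΘdef]
          exact Finset.sum_congr rfl (fun k hk => by
            rw [h k (by simpa using hk)])
        constructor
        · show Real.cos (Θ j x) = Real.cos (Θ j x'); rw [hΘ]
        · show Real.sin (Θ j x) = Real.sin (Θ j x'); rw [hΘ])
      (fun j x => Real.cos_sq_add_sin_sq _) y y']
  by_cases h : y = y'
  · simp only [h, if_true]
    rw [one_div, inv_mul_cancel₀ (pow_ne_zero _ two_ne_zero)]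
  · simp [h]
end

section
/- Let n ≥ 1, N = 2^n, and for every pair 0 ≤ k ≤ j ≤ n-1 let θ_{jk} : {0,1} → R be a function satisfying θ_{jj}(1) = θ_{jj}(0) - π/2 for every j. For a bit vector x ∈ {0,1}^n set Ψ_j(x) = θ_{j0}(x_0) + θ_{j1}(x_1) + ⋯ + θ_{jj}(x_j) for 0 ≤ j ≤ n-1. Then the N×N real matrix M with (y,x) entry Π_{j=0}^{n-1} cos(Ψ_j(x) + π y_j / 2) is unitary (equivalently, orthogonal). -/
open Real Finset

/-- Given functions `θ_{jk} : {0,1} → ℝ` for `0 ≤ k ≤ j ≤ n-1` with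
`θ_{jj}(1) = θ_{jj}(0) - π/2`, set `Ψ_j(x) = Σ_{k≤j} θ_{jk}(x_k)`. Then the real
`2^n × 2^n` matrix with `(y,x)` entry `Π_j cos(Ψ_j(x) + π y_j / 2)` is unitary
(orthogonal). -/
theorem generalized_qft_stmt_12 (n : ℕ) (hn : 1 ≤ n)
    (θ : Fin n → Fin n → Fin 2 → ℝ)
    (hθ : ∀ j : Fin n, θ j j 1 = θ j j 0 - Real.pi / 2)
    (M : Matrix (Fin n → Fin 2) (Fin n → Fin 2) ℝ)
    (hM : ∀ y x : Fin n → Fin 2,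
      M y x = ∏ j : Fin n,
        Real.cos ((∑ k ∈ Finset.univ.filter (fun k : Fin n => (k : ℕ) ≤ (j : ℕ)),
            θ j k (x k)) + Real.pi * (y j : ℕ) / 2)) :
    M ∈ Matrix.unitaryGroup (Fin n → Fin 2) ℝ := by
  set Ψ : Fin n → (Fin n → Fin 2) → ℝ := fun j x =>
    ∑ k ∈ Finset.univ.filter (fun k : Fin n => (k : ℕ) ≤ (j : ℕ)), θ j k (x k) with hΨ
  rw [Matrix.mem_unitaryGroup_iff']
  ext x x'
  rw [Matrix.mul_apply]
  simp only [Matrix.star_apply, star_trivial, hM]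
  have step1 : ∀ y : Fin n → Fin 2,
      (∏ j : Fin n, Real.cos (Ψ j x + Real.pi * (y j : ℕ) / 2)) *
      (∏ j : Fin n, Real.cos (Ψ j x' + Real.pi * (y j : ℕ) / 2)) =
      ∏ j : Fin n, (Real.cos (Ψ j x + Real.pi * (y j : ℕ) / 2) *
        Real.cos (Ψ j x' + Real.pi * (y j : ℕ) / 2)) := by
    intro y; rw [Finset.prod_mul_distrib]
  rw [Finset.sum_congr rfl (fun y _ => step1 y)]
  have step2 : (∑ y : Fin n → Fin 2, ∏ j : Fin n,
      (Real.cos (Ψ j x + Real.pi * (y j : ℕ) / 2) *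
        Real.cos (Ψ j x' + Real.pi * (y j : ℕ) / 2))) =
      ∏ j : Fin n, ∑ b : Fin 2,
      (Real.cos (Ψ j x + Real.pi * (b : ℕ) / 2) *
        Real.cos (Ψ j x' + Real.pi * (b : ℕ) / 2)) := by
    rw [Finset.prod_univ_sum]
    rw [Fintype.piFinset_univ]
  rw [step2]
  have step3 : ∀ j : Fin n, (∑ b : Fin 2,
      (Real.cos (Ψ j x + Real.pi * (b : ℕ) / 2) *
        Real.cos (Ψ j x' + Real.pi * (b : ℕ) / 2))) = Real.cos (Ψ j x - Ψ j x') := by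
    intro j
    rw [Fin.sum_univ_two]
    norm_num
    rw [show Real.pi / 2 = Real.pi / 2 from rfl]
    have h1 : ∀ t : ℝ, Real.cos (t + Real.pi / 2) = -Real.sin t := fun t =>
      Real.cos_add_pi_div_two t
    rw [h1, h1, Real.cos_sub]
    ring
  simp only [step3]
  by_cases hxx : x = x'
  · subst hxx
    simp [Matrix.one_apply]
  · rw [Matrix.one_apply_ne' fun h => hxx h.symm]
    -- find minimal differing index
    have hne : (Finset.univ.filter (fun j : Fin n => x j ≠ x' j)).Nonempty := by
      by_contra h
      apply hxx
      funext j
      by_contra hj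
      exact h ⟨j, Finset.mem_filter.mpr ⟨Finset.mem_univ j, hj⟩⟩
    set S := Finset.univ.filter (fun j : Fin n => x j ≠ x' j)
    set j0 := S.min' hne with hj0
    have hj0S : j0 ∈ S := S.min'_mem hne
    have hj0ne : x j0 ≠ x' j0 := (Finset.mem_filter.mp hj0S).2
    have hlt : ∀ k : Fin n, k < j0 → x k = x' k := by
      intro k hk
      by_contra hkne
      exact absurd (S.min'_le k (Finset.mem_filter.mpr ⟨Finset.mem_univ k, hkne⟩))
        (not_le.mpr hk)
    apply Finset.prod_eq_zero (Finset.mem_univ j0)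
    have hsplit : Ψ j0 x - Ψ j0 x' = θ j0 j0 (x j0) - θ j0 j0 (x' j0) := by
      have hfilter : Finset.univ.filter (fun k : Fin n => (k : ℕ) ≤ (j0 : ℕ)) =
          insert j0 (Finset.univ.filter (fun k : Fin n => (k : ℕ) < (j0 : ℕ))) := by
        ext k
        simp only [Finset.mem_insert, Finset.mem_filter, Finset.mem_univ, true_and]
        constructor
        · intro h
          rcases lt_or_eq_of_le h with h | h
          · exact Or.inr h
          · exact Or.inl (Fin.ext h)
        · rintro (rfl | h)
          · exact le_refl _
          · exact le_of_lt h
      have hnotmem : j0 ∉ Finset.univ.filter (fun k : Fin n => (k : ℕ) < (j0 : ℕ)) := by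
        simp
      simp only [hΨ, hfilter, Finset.sum_insert hnotmem]
      have heq : ∀ k ∈ Finset.univ.filter (fun k : Fin n => (k : ℕ) < (j0 : ℕ)),
          θ j0 k (x k) = θ j0 k (x' k) := by
        intro k hk
        rw [hlt k (Finset.mem_filter.mp hk).2]
      rw [Finset.sum_congr rfl heq]
      ring
    rw [hsplit]
    -- x j0 and x' j0 differ in Fin 2
    have h2 : (x j0 = 0 ∧ x' j0 = 1) ∨ (x j0 = 1 ∧ x' j0 = 0) := by
      have ha := (x j0).isLt
      have hb := (x' j0).isLt
      have hne' : (x j0).val ≠ (x' j0).val := fun h => hj0ne (Fin.ext h)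
      simp only [Fin.ext_iff, Fin.val_zero, Fin.val_one]
      omega
    rcases h2 with ⟨h1, h2⟩ | ⟨h1, h2⟩ <;> rw [h1, h2, hθ j0]
    · rw [show θ j0 j0 0 - (θ j0 j0 0 - Real.pi / 2) = Real.pi / 2 by ring,
        Real.cos_pi_div_two]
    · rw [show θ j0 j0 0 - Real.pi / 2 - θ j0 j0 0 = -(Real.pi / 2) by ring,
        Real.cos_neg, Real.cos_pi_div_two]
end

section
/- For every n ≥ 1 and every bit vector x = (x_0,…,x_{n-1}) ∈ {0,1}^n, the Haar matrix A_{2^n} satisfies A_{2^n} e_x = e_0 + Σ_{i=0}^{n-1} (-1)^{x_i} e_{r_i(x)}, where e_x denotes the standard basis vector indexed by the big-endian integer Σ_k x_k 2^{n-1-k}, e_0 is the basis vector of index 0, and r_i(x) = 2^i + Σ_{k=0}^{i-1} x_k 2^{i-1-k} is the big-endian index of the bit string 0^{n-i-1} 1 x_0 ⋯ x_{i-1}. -/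
/-- Each row of bits `x ∈ {0,1}^m`, read big-endian as `Σ_k x_k 2^{m-1-k}`,
is an integer `< 2^m`. -/
theorem sum_bits_lt (m : ℕ) (x : Fin m → Fin 2) :
    (∑ k : Fin m, (x k : ℕ) * 2 ^ (m - 1 - (k : ℕ))) < 2 ^ m := by
  have h2 : ∀ t : ℕ, ∑ j ∈ Finset.range t, 2 ^ j = 2 ^ t - 1 := by
    intro t
    induction t with
    | zero => simp
    | succ t ih =>
      rw [Finset.sum_range_succ, ih]
      have h1 : 1 ≤ 2 ^ t := Nat.one_le_two_pow
      have h3 : 2 ^ (t + 1) = 2 ^ t * 2 := pow_succ 2 t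
      omega
  calc (∑ k : Fin m, (x k : ℕ) * 2 ^ (m - 1 - (k : ℕ)))
      ≤ ∑ k : Fin m, 1 * 2 ^ (m - 1 - (k : ℕ)) :=
        Finset.sum_le_sum (fun k _ => Nat.mul_le_mul_right _ (by have := (x k).isLt; omega))
    _ = ∑ j ∈ Finset.range m, 2 ^ (m - 1 - j) := by
        rw [Finset.sum_range (fun j => 2 ^ (m - 1 - j))]
        simp
    _ = ∑ j ∈ Finset.range m, 2 ^ j := Finset.sum_range_reflect (fun j => 2 ^ j) m
    _ = 2 ^ m - 1 := h2 m
    _ < 2 ^ m := by have : 1 ≤ 2 ^ m := Nat.one_le_two_pow; omega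

/-- Big-endian encoding of a bit string as an index in `Fin (2^m)`. -/
def bitEnc {m : ℕ} (x : Fin m → Fin 2) : Fin (2 ^ m) :=
  ⟨∑ k : Fin m, (x k : ℕ) * 2 ^ (m - 1 - (k : ℕ)), sum_bits_lt m x⟩

/-- The big-endian index `r_i(b) = 2^i + Σ_{k<i} b_k 2^{i-1-k}` of the bit string
`0^{n-i-1} 1 b_0 ⋯ b_{i-1}`. -/
def rIdx {n : ℕ} (i : Fin n) (b : Fin (i : ℕ) → Fin 2) : Fin (2 ^ n) :=
  ⟨2 ^ (i : ℕ) + ∑ k : Fin (i : ℕ), (b k : ℕ) * 2 ^ ((i : ℕ) - 1 - (k : ℕ)), by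
    have h1 := sum_bits_lt (i : ℕ) b
    have h2 : 2 ^ ((i : ℕ) + 1) ≤ 2 ^ n := Nat.pow_le_pow_right (by norm_num) i.isLt
    have h3 : 2 ^ ((i : ℕ) + 1) = 2 ^ (i : ℕ) * 2 := pow_succ 2 _
    omega⟩

/-- The Haar matrices, defined recursively by `A_{2^0} = (1)`,
`A_{2^{n+1}} = [A_{2^n} ⊗ (1,1) ; I_{2^n} ⊗ (1,-1)]`, with rows and columns indexed
big-endian (so column `c` decomposes as `(c / 2, c % 2)`). In particular
`A_2 = [[1,1],[1,-1]]`. -/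
def haarA : (n : ℕ) → Matrix (Fin (2 ^ n)) (Fin (2 ^ n)) ℝ
  | 0 => 1
  | n + 1 => Matrix.of fun r c =>
      if hr : (r : ℕ) < 2 ^ n then
        haarA n ⟨(r : ℕ), hr⟩ ⟨(c : ℕ) / 2, by
          have h := c.isLt
          have h3 : 2 ^ (n + 1) = 2 ^ n * 2 := pow_succ 2 n
          omega⟩
      else
        if (c : ℕ) / 2 = (r : ℕ) - 2 ^ n then (if (c : ℕ) % 2 = 0 then 1 else -1) else 0


lemma bitEnc_succ (n : ℕ) (x : Fin (n + 1) → Fin 2) :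
    (bitEnc x : ℕ) =
      2 * (bitEnc (fun k : Fin n => x k.castSucc) : ℕ) + (x (Fin.last n) : ℕ) := by
  simp only [bitEnc]
  rw [Fin.sum_univ_castSucc]
  simp only [Fin.coe_castSucc, Fin.val_last]
  rw [show (n + 1) - 1 - n = 0 from by omega, pow_zero, mul_one, Finset.mul_sum]
  congr 1
  apply Finset.sum_congr rfl
  intro k _
  have hk : (k : ℕ) < n := k.isLt
  rw [show (n + 1) - 1 - (k : ℕ) = (n - 1 - (k : ℕ)) + 1 from by omega, pow_succ]
  ring

lemma rIdx_lt {n : ℕ} (i : Fin n) (b : Fin (i : ℕ) → Fin 2) :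
    (rIdx i b : ℕ) < 2 ^ ((i : ℕ) + 1) := by
  have h1 := sum_bits_lt (i : ℕ) b
  have h3 : 2 ^ ((i : ℕ) + 1) = 2 ^ (i : ℕ) * 2 := pow_succ 2 _
  simp only [rIdx]
  omega

lemma haar_key (n : ℕ) (x : Fin n → Fin 2) (r : Fin (2 ^ n)) :
    haarA n r (bitEnc x) =
      (if r = (⟨0, Nat.two_pow_pos n⟩ : Fin (2 ^ n)) then 1 else 0) +
        ∑ i : Fin n, (-1 : ℝ) ^ ((x i : ℕ)) *
          (if r = rIdx i (fun k : Fin (i : ℕ) => x ⟨(k : ℕ), k.isLt.trans i.isLt⟩)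
            then 1 else 0) := by
  induction n with
  | zero =>
      have h1 : (r : ℕ) = 0 := by
        have h := r.isLt; have hp : (2 : ℕ) ^ 0 = 1 := pow_zero 2; omega
      have h2 : ((bitEnc x) : ℕ) = 0 := by
        have h := (bitEnc x).isLt; have hp : (2 : ℕ) ^ 0 = 1 := pow_zero 2; omega
      have hrc : r = bitEnc x := Fin.ext (by omega)
      have hr0 : r = (⟨0, Nat.two_pow_pos 0⟩ : Fin (2 ^ 0)) := Fin.ext h1
      rw [show haarA 0 = 1 from rfl, Matrix.one_apply, if_pos hrc, if_pos hr0]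
      simp
  | succ n ih =>
      set x' : Fin n → Fin 2 := fun k => x k.castSucc with hx'
      set c : Fin (2 ^ (n + 1)) := bitEnc x with hc
      have hcval : (c : ℕ) = 2 * (bitEnc x' : ℕ) + (x (Fin.last n) : ℕ) :=
        bitEnc_succ n x
      have hxlast : (x (Fin.last n) : ℕ) < 2 := (x (Fin.last n)).isLt
      have hcdiv : (c : ℕ) / 2 = (bitEnc x' : ℕ) := by omega
      have hcmod : (c : ℕ) % 2 = (x (Fin.last n) : ℕ) := by omega
      -- value of rIdx at castSucc index agrees with rIdx at lower level
      have hrIdx : ∀ i : Fin n,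
          (rIdx (i.castSucc) (fun k : Fin ((i.castSucc : ℕ)) =>
              x ⟨(k : ℕ), k.isLt.trans i.castSucc.isLt⟩) : ℕ) =
          (rIdx i (fun k : Fin (i : ℕ) =>
              x' ⟨(k : ℕ), k.isLt.trans i.isLt⟩) : ℕ) := by
        intro i
        rfl
      have hrIdxLast : (rIdx (Fin.last n) (fun k : Fin ((Fin.last n : ℕ)) =>
          x ⟨(k : ℕ), k.isLt.trans (Fin.last n).isLt⟩) : ℕ) =
          2 ^ n + (bitEnc x' : ℕ) := by
        rfl
      rw [show haarA (n + 1) r c = _ from rfl]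
      simp only [haarA, Matrix.of_apply]
      rw [Fin.sum_univ_castSucc]
      by_cases hr : (r : ℕ) < 2 ^ n
      · rw [dif_pos hr]
        have hcol : (⟨(c : ℕ) / 2, by
            have h := c.isLt
            have h3 : 2 ^ (n + 1) = 2 ^ n * 2 := pow_succ 2 n
            omega⟩ : Fin (2 ^ n)) = bitEnc x' := Fin.ext hcdiv
        rw [hcol, ih x' ⟨(r : ℕ), hr⟩]
        have hterm0 : ((if (⟨(r : ℕ), hr⟩ : Fin (2 ^ n)) = ⟨0, Nat.two_pow_pos n⟩
            then (1 : ℝ) else 0)) =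
            (if r = (⟨0, Nat.two_pow_pos (n + 1)⟩ : Fin (2 ^ (n + 1))) then 1 else 0) := by
          simp only [Fin.ext_iff]
        have hlastterm : (if r = rIdx (Fin.last n) (fun k : Fin ((Fin.last n : ℕ)) =>
            x ⟨(k : ℕ), k.isLt.trans (Fin.last n).isLt⟩) then (1 : ℝ) else 0) = 0 := by
          rw [if_neg]
          intro h
          rw [Fin.ext_iff, hrIdxLast] at h
          omega
        rw [hterm0, hlastterm, mul_zero, add_zero]
        congr 1
        apply Finset.sum_congr rfl
        intro i _
        have hcond : ((⟨(r : ℕ), hr⟩ : Fin (2 ^ n)) =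
            rIdx i (fun k : Fin (i : ℕ) => x' ⟨(k : ℕ), k.isLt.trans i.isLt⟩)) ↔
            (r = rIdx (i.castSucc) (fun k : Fin ((i.castSucc : ℕ)) =>
              x ⟨(k : ℕ), k.isLt.trans i.castSucc.isLt⟩)) := by
          rw [Fin.ext_iff, Fin.ext_iff, hrIdx i]
        rw [if_congr hcond rfl rfl]
      · rw [dif_neg hr]
        have hrpos : r ≠ (⟨0, Nat.two_pow_pos (n + 1)⟩ : Fin (2 ^ (n + 1))) := by
          intro h
          have hv : (r : ℕ) = 0 := congrArg Fin.val h
          have := Nat.one_le_two_pow (n := n)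
          omega
        rw [if_neg hrpos]
        have hsum0 : ∀ i : Fin n, ((-1 : ℝ)) ^ ((x i.castSucc : ℕ)) *
            (if r = rIdx (i.castSucc) (fun k : Fin ((i.castSucc : ℕ)) =>
              x ⟨(k : ℕ), k.isLt.trans i.castSucc.isLt⟩) then 1 else 0) = 0 := by
          intro i
          rw [if_neg, mul_zero]
          intro h
          rw [Fin.ext_iff, hrIdx i] at h
          have hlt : (rIdx i (fun k : Fin (i : ℕ) =>
              x' ⟨(k : ℕ), k.isLt.trans i.isLt⟩) : ℕ) < 2 ^ ((i : ℕ) + 1) := rIdx_lt _ _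
          have hle : 2 ^ ((i : ℕ) + 1) ≤ 2 ^ n := Nat.pow_le_pow_right (by norm_num) i.isLt
          omega
        rw [Finset.sum_congr rfl (fun i _ => hsum0 i), Finset.sum_const, smul_zero, zero_add]
        have hiff : ((c : ℕ) / 2 = (r : ℕ) - 2 ^ n) ↔
            (r = rIdx (Fin.last n) (fun k : Fin ((Fin.last n : ℕ)) =>
              x ⟨(k : ℕ), k.isLt.trans (Fin.last n).isLt⟩)) := by
          rw [Fin.ext_iff, hrIdxLast, hcdiv]
          have hb := (bitEnc x').isLt
          have hrlt := r.isLt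
          have h2 : 2 ^ (n + 1) = 2 * 2 ^ n := by ring
          omega
        by_cases hcase : (c : ℕ) / 2 = (r : ℕ) - 2 ^ n
        · rw [if_pos hcase, if_pos (hiff.mp hcase), mul_one, hcmod]
          have h01 : (x (Fin.last n) : ℕ) = 0 ∨ (x (Fin.last n) : ℕ) = 1 := by omega
          rcases h01 with h | h <;> simp [h]
        · rw [if_neg hcase, if_neg (fun h => hcase (hiff.mpr h)), mul_zero, add_zero]

/-- For every `n ≥ 1` and bit vector `x ∈ {0,1}^n`, the Haar matrix
satisfies `A_{2^n} e_x = e_0 + Σ_{i=0}^{n-1} (-1)^{x_i} e_{r_i(x)}`, where `r_i(x)` is the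
big-endian index of the bit string `0^{n-i-1} 1 x_0 ⋯ x_{i-1}`. -/
theorem haar_stmt_13 (n : ℕ) (hn : 1 ≤ n) (x : Fin n → Fin 2) (r : Fin (2 ^ n)) :
    haarA n r (bitEnc x) =
      (if r = (⟨0, Nat.two_pow_pos n⟩ : Fin (2 ^ n)) then 1 else 0) +
        ∑ i : Fin n, (-1 : ℝ) ^ ((x i : ℕ)) *
          (if r = rIdx i (fun k : Fin (i : ℕ) => x ⟨(k : ℕ), k.isLt.trans i.isLt⟩)
            then 1 else 0) := by
  exact haar_key n x r
end

section
/- For every n ≥ 1, the real 2^n × 2^n matrix P_{2^n} defined entrywise as follows is unitary (orthogonal): for a column indexed by the bit vector x = (x_0,…,x_{n-1}) ∈ {0,1}^n (big-endian index Σ_k x_k 2^{n-1-k}), the entry in row 0 is 1/√(2^n); the entry in row r_i(b) = 2^i + Σ_{k<i} b_k 2^{i-1-k} (for 0 ≤ i ≤ n-1 and b ∈ {0,1}^i) is (-1)^{x_i} √(2^i)/√(2^n) if (x_0,…,x_{i-1}) = b, and 0 otherwise. Equivalently, P_{2^n} e_x = (1/√(2^n)) (e_0 + Σ_{i=0}^{n-1}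 (-1)^{x_i} √(2^i) e_{r_i(x)}). -/
namespace HaarAux

def encLE {m : ℕ} (z : Fin m → Fin 2) : ℕ := ∑ k : Fin m, (z k : ℕ) * 2 ^ (k : ℕ)

lemma encLE_inj {m : ℕ} : Function.Injective (encLE (m := m)) := by
  induction m with
  | zero => intro x y _; funext k; exact k.elim0
  | succ m ih =>
    intro x y h
    have key : ∀ z : Fin (m+1) → Fin 2,
        encLE z = (z 0 : ℕ) + 2 * encLE (fun k : Fin m => z k.succ) := by
      intro z
      simp only [encLE, Fin.sum_univ_succ, Fin.val_zero, pow_zero, mul_one, Fin.val_succ,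
        pow_succ, Finset.mul_sum]
      congr 1
      exact Finset.sum_congr rfl (fun k _ => by ring)
    rw [key x, key y] at h
    have hx0 := (x 0).isLt
    have hy0 := (y 0).isLt
    have h0' : x 0 = y 0 := Fin.ext (by omega)
    have ht : encLE (fun k : Fin m => x k.succ) = encLE (fun k : Fin m => y k.succ) := by omega
    have ht' := ih ht
    funext k
    refine Fin.cases h0' (fun j => congrFun ht' j) k

lemma be_eq {m : ℕ} (x : Fin m → Fin 2) :
    (∑ k : Fin m, (x k : ℕ) * 2 ^ (m - 1 - (k : ℕ))) = encLE (x ∘ Fin.rev) := by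
  rw [encLE, ← Equiv.sum_comp (Fin.revPerm) (fun k => ((x ∘ Fin.rev) k : ℕ) * 2 ^ (k : ℕ))]
  refine Finset.sum_congr rfl (fun k _ => ?_)
  simp only [Fin.revPerm_apply, Function.comp_apply, Fin.rev_rev, Fin.val_rev]
  congr 2
  omega

lemma sum_bits_inj {m : ℕ} (x y : Fin m → Fin 2)
    (h : (∑ k : Fin m, (x k : ℕ) * 2 ^ (m - 1 - (k : ℕ)))
       = ∑ k : Fin m, (y k : ℕ) * 2 ^ (m - 1 - (k : ℕ))) : x = y := by
  rw [be_eq, be_eq] at h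
  have := encLE_inj h
  funext k
  have := congrFun this k.rev
  simpa [Function.comp, Fin.rev_rev] using this

lemma bitEnc_inj {m : ℕ} : Function.Injective (bitEnc (m := m)) := by
  intro x y h
  exact sum_bits_inj x y (congrArg Fin.val h)

lemma bitEnc_bij {m : ℕ} : Function.Bijective (bitEnc (m := m)) :=
  (Fintype.bijective_iff_injective_and_card _).2 ⟨bitEnc_inj, by simp⟩

/-- row index map -/
def rowMap (n : ℕ) : Unit ⊕ (Σ i : Fin n, Fin (i : ℕ) → Fin 2) → Fin (2 ^ n)
  | .inl _ => ⟨0, Nat.two_pow_pos n⟩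
  | .inr ⟨i, b⟩ => rIdx i b

lemma rowMap_inj (n : ℕ) : Function.Injective (rowMap n) := by
  rintro (⟨⟩ | ⟨i, b⟩) (⟨⟩ | ⟨i', b'⟩) h
  · rfl
  · exfalso
    have := congrArg Fin.val h
    simp only [rowMap, rIdx] at this
    have := Nat.one_le_two_pow (n := (i' : ℕ))
    omega
  · exfalso
    have := congrArg Fin.val h
    simp only [rowMap, rIdx] at this
    have := Nat.one_le_two_pow (n := (i : ℕ))
    omega
  · have hval := congrArg Fin.val h
    simp only [rowMap, rIdx] at hval
    have hs := sum_bits_lt (i : ℕ) b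
    have hs' := sum_bits_lt (i' : ℕ) b'
    have hii : (i : ℕ) = (i' : ℕ) := by
      by_contra hne
      rcases Nat.lt_or_ge (i : ℕ) (i' : ℕ) with hlt | hge
      · have : 2 ^ ((i : ℕ) + 1) ≤ 2 ^ (i' : ℕ) := Nat.pow_le_pow_right (by norm_num) hlt
        have : 2 ^ ((i : ℕ) + 1) = 2 ^ (i : ℕ) * 2 := pow_succ 2 _
        omega
      · have hlt' : (i' : ℕ) < (i : ℕ) := by omega
        have : 2 ^ ((i' : ℕ) + 1) ≤ 2 ^ (i : ℕ) := Nat.pow_le_pow_right (by norm_num) hlt'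
        have : 2 ^ ((i' : ℕ) + 1) = 2 ^ (i' : ℕ) * 2 := pow_succ 2 _
        omega
    have hi : i = i' := Fin.ext hii
    subst hi
    have hsum : (∑ k : Fin (i : ℕ), (b k : ℕ) * 2 ^ ((i : ℕ) - 1 - (k : ℕ)))
        = ∑ k : Fin (i : ℕ), (b' k : ℕ) * 2 ^ ((i : ℕ) - 1 - (k : ℕ)) := by omega
    have := sum_bits_inj b b' hsum
    subst this
    rfl

lemma card_eq (n : ℕ) :
    Fintype.card (Unit ⊕ (Σ i : Fin n, Fin (i : ℕ) → Fin 2)) = 2 ^ n := by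
  have hgeom : ∑ j ∈ Finset.range n, 2 ^ j = 2 ^ n - 1 := by
    induction n with
    | zero => simp
    | succ t ih =>
      rw [Finset.sum_range_succ, ih]
      have h1 : 1 ≤ 2 ^ t := Nat.one_le_two_pow
      have h3 : 2 ^ (t + 1) = 2 ^ t * 2 := pow_succ 2 t
      omega
  have h1 : 1 ≤ 2 ^ n := Nat.one_le_two_pow
  simp only [Fintype.card_sum, Fintype.card_unit, Fintype.card_sigma, Fintype.card_fun,
    Fintype.card_fin]
  rw [Fin.sum_univ_eq_sum_range (fun j => 2 ^ j) n, hgeom]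
  omega

lemma rowMap_bij (n : ℕ) : Function.Bijective (rowMap n) :=
  (Fintype.bijective_iff_injective_and_card _).2 ⟨rowMap_inj n, by rw [card_eq n, Fintype.card_fin]⟩

end HaarAux

/-- The quantum Haar transformation `P_{2^n}`, defined entrywise by:
the row-`0` entry in column `x` is `1/√(2^n)`, and the row-`r_i(b)` entry in column `x`
is `(-1)^{x_i} √(2^i)/√(2^n)` if `(x_0,…,x_{i-1}) = b` and `0` otherwise, is unitary
(orthogonal). -/
theorem haar_stmt_15 (n : ℕ) (hn : 1 ≤ n)
    (P : Matrix (Fin (2 ^ n)) (Fin (2 ^ n)) ℝ)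
    (h0 : ∀ x : Fin n → Fin 2,
      P (⟨0, Nat.two_pow_pos n⟩ : Fin (2 ^ n)) (bitEnc x) = 1 / Real.sqrt (2 ^ n))
    (h1 : ∀ (i : Fin n) (b : Fin (i : ℕ) → Fin 2) (x : Fin n → Fin 2),
      P (rIdx i b) (bitEnc x) =
        if ∀ k : Fin (i : ℕ), x ⟨(k : ℕ), k.isLt.trans i.isLt⟩ = b k
        then (-1 : ℝ) ^ ((x i : ℕ)) * Real.sqrt (2 ^ (i : ℕ)) / Real.sqrt (2 ^ n)
        else 0) :
    P ∈ Matrix.unitaryGroup (Fin (2 ^ n)) ℝ := by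
  have hB : (0:ℝ) < 2 ^ n := by positivity
  have hsB : Real.sqrt (2 ^ n) * Real.sqrt (2 ^ n) = (2:ℝ) ^ n := Real.mul_self_sqrt hB.le
  have hsB0 : Real.sqrt ((2:ℝ) ^ n) ≠ 0 := by
    intro h; rw [h, mul_zero] at hsB; exact hB.ne' hsB.symm
  rw [Matrix.mem_unitaryGroup_iff']
  ext x y
  obtain ⟨a, rfl⟩ := HaarAux.bitEnc_bij.surjective x
  obtain ⟨c, rfl⟩ := HaarAux.bitEnc_bij.surjective y
  rw [Matrix.mul_apply, Matrix.one_apply]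
  simp only [Matrix.star_apply, star_trivial]
  -- reindex the sum over rows
  have hsum : (∑ r : Fin (2^n), P r (bitEnc a) * P r (bitEnc c))
      = P ⟨0, Nat.two_pow_pos n⟩ (bitEnc a) * P ⟨0, Nat.two_pow_pos n⟩ (bitEnc c)
        + ∑ i : Fin n, ∑ b : Fin (i:ℕ) → Fin 2,
            P (rIdx i b) (bitEnc a) * P (rIdx i b) (bitEnc c) := by
    rw [← Equiv.sum_comp (Equiv.ofBijective _ (HaarAux.rowMap_bij n))
        (fun r => P r (bitEnc a) * P r (bitEnc c)), Fintype.sum_sum_type]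
    congr 1
    · simp [HaarAux.rowMap]
    · rw [← Finset.univ_sigma_univ, Finset.sum_sigma]
      rfl
  -- inner sums
  have inner : ∀ i : Fin n,
      (∑ b : Fin (i:ℕ) → Fin 2, P (rIdx i b) (bitEnc a) * P (rIdx i b) (bitEnc c))
      = (if ∀ k : Fin (i:ℕ), c ⟨(k:ℕ), k.isLt.trans i.isLt⟩ = a ⟨(k:ℕ), k.isLt.trans i.isLt⟩
         then (-1:ℝ) ^ ((a i : ℕ) + (c i : ℕ)) * 2 ^ (i:ℕ) else 0) / 2 ^ n := by
    intro i
    have hsi : Real.sqrt ((2:ℝ) ^ (i:ℕ)) * Real.sqrt ((2:ℝ) ^ (i:ℕ)) = (2:ℝ) ^ (i:ℕ) :=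
      Real.mul_self_sqrt (by positivity)
    rw [Finset.sum_eq_single (fun k : Fin (i:ℕ) => a ⟨(k:ℕ), k.isLt.trans i.isLt⟩)]
    · rw [h1, h1, if_pos (fun k => rfl)]
      split_ifs with hc
      · rw [pow_add]
        have hexp : ((-1:ℝ) ^ ((a i : ℕ)) * Real.sqrt ((2:ℝ)^(i:ℕ)) / Real.sqrt ((2:ℝ)^n)) *
            ((-1:ℝ) ^ ((c i : ℕ)) * Real.sqrt ((2:ℝ)^(i:ℕ)) / Real.sqrt ((2:ℝ)^n)) =
            ((-1:ℝ)^((a i : ℕ)) * (-1)^((c i : ℕ)))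
              * (Real.sqrt ((2:ℝ)^(i:ℕ)) * Real.sqrt ((2:ℝ)^(i:ℕ)))
              / (Real.sqrt ((2:ℝ)^n) * Real.sqrt ((2:ℝ)^n)) := by ring
        rw [hexp, hsi, hsB]
      · simp
    · intro b _ hb
      rw [h1, if_neg, zero_mul]
      intro hall
      exact hb (funext fun k => (hall k).symm)
    · intro h
      exact absurd (Finset.mem_univ _) h
  rw [hsum, h0, h0]
  simp only [inner]
  rw [← Finset.sum_div]
  by_cases hac : a = c
  · subst hac
    rw [if_pos rfl]
    have : ∀ i : Fin n,
        (if ∀ k : Fin (i:ℕ), a ⟨(k:ℕ), k.isLt.trans i.isLt⟩ = a ⟨(k:ℕ), k.isLt.trans i.isLt⟩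
         then (-1:ℝ) ^ ((a i : ℕ) + (a i : ℕ)) * 2 ^ (i:ℕ) else 0) = 2 ^ (i:ℕ) := by
      intro i
      rw [if_pos (fun k => rfl)]
      have : (-1:ℝ) ^ ((a i : ℕ) + (a i : ℕ)) = 1 := Even.neg_one_pow ⟨(a i : ℕ), rfl⟩
      rw [this, one_mul]
    rw [Finset.sum_congr rfl (fun i _ => this i)]
    rw [Fin.sum_univ_eq_sum_range (fun t => (2:ℝ)^t) n, geom_sum_eq (by norm_num)]
    rw [div_mul_div_comm, one_mul, hsB]
    field_simp
    ring
  · rw [if_neg (fun h => hac (HaarAux.bitEnc_inj h))]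
    -- least index where a and c differ
    have hD : (Finset.univ.filter (fun i : Fin n => a i ≠ c i)).Nonempty := by
      by_contra h
      rw [Finset.not_nonempty_iff_eq_empty, Finset.filter_eq_empty_iff] at h
      exact hac (funext fun i => not_not.mp (h (Finset.mem_univ i)))
    set j := (Finset.univ.filter (fun i : Fin n => a i ≠ c i)).min' hD with hj
    have hjmem : a j ≠ c j := by
      have := Finset.min'_mem _ hD
      rw [Finset.mem_filter] at this
      exact this.2
    have hjmin : ∀ i : Fin n, a i ≠ c i → j ≤ i := by
      intro i hi
      exact Finset.min'_le _ _ (Finset.mem_filter.mpr ⟨Finset.mem_univ i, hi⟩)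
    have hlt : ∀ i : Fin n, (i:ℕ) < (j:ℕ) → a i = c i := by
      intro i hi
      by_contra h
      have hle := hjmin i h
      rw [Fin.le_def] at hle
      omega
    -- per-term values
    have hterm : ∀ i : Fin n,
        (if ∀ k : Fin (i:ℕ), c ⟨(k:ℕ), k.isLt.trans i.isLt⟩ = a ⟨(k:ℕ), k.isLt.trans i.isLt⟩
         then (-1:ℝ) ^ ((a i : ℕ) + (c i : ℕ)) * 2 ^ (i:ℕ) else 0)
        = (if (i:ℕ) < (j:ℕ) then 2 ^ (i:ℕ) else if (i:ℕ) = (j:ℕ) then -((2:ℝ) ^ (j:ℕ)) else 0) := by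
      intro i
      rcases lt_trichotomy (i:ℕ) (j:ℕ) with hij | hij | hij
      · rw [if_pos, if_pos hij]
        · have hai : a i = c i := hlt i hij
          have : (-1:ℝ) ^ ((a i : ℕ) + (c i : ℕ)) = 1 := by
            rw [hai]; exact Even.neg_one_pow ⟨(c i : ℕ), rfl⟩
          rw [this, one_mul]
        · intro k
          exact (hlt ⟨(k:ℕ), k.isLt.trans i.isLt⟩ (lt_trans k.isLt hij)).symm
      · have hij' : i = j := Fin.ext hij
        rw [if_pos, if_neg (by omega), if_pos hij]
        · have hv : ((a i : ℕ) + (c i : ℕ)) = 1 := by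
            have ha2 := (a i).isLt
            have hc2 := (c i).isLt
            have hne : (a i : ℕ) ≠ (c i : ℕ) := by
              intro h
              exact hjmem (by rw [← hij']; exact Fin.ext h)
            omega
          rw [hv, pow_one, neg_one_mul, hij]
        · intro k
          have hik : (k : ℕ) < (j:ℕ) := by have := k.isLt; omega
          exact (hlt ⟨(k:ℕ), k.isLt.trans i.isLt⟩ hik).symm
      · rw [if_neg, if_neg (by omega), if_neg (by omega)]
        intro hall
        have hk := hall ⟨(j:ℕ), hij⟩
        have : c j = a j := by
          have : (⟨(j:ℕ), (Fin.mk (j:ℕ) hij).isLt.trans i.isLt⟩ : Fin n) = j := Fin.ext rfl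
          rwa [this] at hk
        exact hjmem this.symm
    rw [Finset.sum_congr rfl (fun i _ => hterm i)]
    have hsumval : (∑ i : Fin n,
        (if (i:ℕ) < (j:ℕ) then (2:ℝ) ^ (i:ℕ) else if (i:ℕ) = (j:ℕ) then -((2:ℝ) ^ (j:ℕ)) else 0))
        = -1 := by
      rw [Fin.sum_univ_eq_sum_range
        (fun t => if t < (j:ℕ) then (2:ℝ)^t else if t = (j:ℕ) then -((2:ℝ)^(j:ℕ)) else 0) n]
      have hjn : (j:ℕ) + 1 ≤ n := j.isLt
      rw [Finset.range_eq_Ico, ← Finset.sum_Ico_consecutive _ (Nat.zero_le ((j:ℕ)+1)) hjn]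
      have h2 : (∑ t ∈ Finset.Ico ((j:ℕ)+1) n,
          (if t < (j:ℕ) then (2:ℝ)^t else if t = (j:ℕ) then -((2:ℝ)^(j:ℕ)) else 0)) = 0 := by
        refine Finset.sum_eq_zero (fun t ht => ?_)
        rw [Finset.mem_Ico] at ht
        rw [if_neg (by omega), if_neg (by omega)]
      rw [h2, add_zero, ← Finset.range_eq_Ico, Finset.sum_range_succ, if_neg (by omega),
        if_pos rfl]
      have h3 : (∑ t ∈ Finset.range (j:ℕ),
          (if t < (j:ℕ) then (2:ℝ)^t else if t = (j:ℕ) then -((2:ℝ)^(j:ℕ)) else 0))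
          = ∑ t ∈ Finset.range (j:ℕ), (2:ℝ)^t := by
        refine Finset.sum_congr rfl (fun t ht => ?_)
        rw [Finset.mem_range] at ht
        rw [if_pos ht]
      rw [h3, geom_sum_eq (by norm_num)]
      ring
    rw [hsumval]
    field_simp
    rw [Real.sq_sqrt hB.le]; ring
end

section
/- Let n ≥ 1, N = 2^n, and let w = (w_0,…,w_{n-1}) be a real vector. Then (1/N²) | Σ_{x ∈ {0,1}^n} exp(2πi (Σ_j w_j x_j)/N) |² = Π_{j=0}^{n-1} cos²(π w_j / N). -/
lemma abs_one_add_exp_sq (θ : ℝ) :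
    ‖1 + Complex.exp ((θ : ℂ) * Complex.I)‖ ^ 2
      = 4 * Real.cos (θ / 2) ^ 2 := by
  rw [Complex.sq_norm, Complex.exp_mul_I]
  have hc : Real.cos θ = 2 * Real.cos (θ / 2) ^ 2 - 1 := by
    have h2 := Real.cos_two_mul (θ / 2)
    rwa [show 2 * (θ / 2) = θ by ring] at h2
  have hs := Real.sin_sq_add_cos_sq θ
  simp [Complex.normSq_apply, Complex.cos_ofReal_re, Complex.sin_ofReal_re,
    ← Complex.ofReal_cos, ← Complex.ofReal_sin]
  nlinarith [hs, hc]

/-- For `n ≥ 1`, `N = 2^n` and a real vector `w`,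
`(1/N²) |Σ_{x ∈ {0,1}^n} exp(2πi (Σ_j w_j x_j)/N)|² = Π_j cos²(π w_j / N)`. -/
theorem generalized_qft_stmt_18 (n : ℕ) (hn : 1 ≤ n) (w : Fin n → ℝ) :
    (1 / ((2 : ℝ) ^ n) ^ 2) *
        (‖(∑ x : Fin n → Fin 2,
          Complex.exp (2 * (Real.pi : ℂ) * Complex.I *
            ((∑ j, w j * ((x j : ℕ) : ℝ) : ℝ) : ℂ) / (2 : ℂ) ^ n))‖) ^ 2
      = ∏ j : Fin n, Real.cos (Real.pi * w j / 2 ^ n) ^ 2 := by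
  have key : ∀ x : Fin n → Fin 2,
      Complex.exp (2 * (Real.pi : ℂ) * Complex.I *
          ((∑ j, w j * ((x j : ℕ) : ℝ) : ℝ) : ℂ) / (2 : ℂ) ^ n)
        = ∏ j, Complex.exp ((2 * Real.pi * w j * ((x j : ℕ) : ℝ) / 2 ^ n : ℝ) * Complex.I) := by
    intro x
    rw [← Complex.exp_sum]
    congr 1
    push_cast
    rw [Finset.mul_sum, Finset.sum_div]
    exact Finset.sum_congr rfl fun j _ => by ring
  have hps := Fintype.prod_sum (fun (j : Fin n) (v : Fin 2) =>
    Complex.exp ((2 * Real.pi * w j * ((v : ℕ) : ℝ) / 2 ^ n : ℝ) * Complex.I))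
  rw [Finset.sum_congr rfl fun x _ => key x, ← hps, norm_prod]
  rw [← Finset.prod_pow]
  have hfac : ∀ j : Fin n,
      ‖∑ v : Fin 2, Complex.exp ((2 * Real.pi * w j * ((v : ℕ) : ℝ) / 2 ^ n : ℝ) * Complex.I)‖ ^ 2
        = 4 * Real.cos (Real.pi * w j / 2 ^ n) ^ 2 := by
    intro j
    rw [Fin.sum_univ_two]
    simp only [Fin.val_zero, Nat.cast_zero, mul_zero, zero_div, Complex.ofReal_zero, zero_mul,
      Complex.exp_zero, Fin.val_one, Nat.cast_one, mul_one]
    have := abs_one_add_exp_sq (2 * Real.pi * w j / 2 ^ n)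
    rw [this, show 2 * Real.pi * w j / 2 ^ n / 2 = Real.pi * w j / 2 ^ n by ring]
  rw [Finset.prod_congr rfl fun j _ => hfac j, Finset.prod_mul_distrib]
  rw [Finset.prod_const, Finset.card_univ, Fintype.card_fin]
  have : (4 : ℝ) ^ n = ((2 : ℝ) ^ n) ^ 2 := by
    rw [← pow_mul, show n * 2 = 2 * n by ring, pow_mul]; norm_num
  rw [this]
  field_simp
end
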